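/- Let n ≥ 1, let 0 < α ≤ 1/2 and c₁ > 0, and let π : ℝⁿ → ℝ be a measurable function with π ≥ 0 everywhere and π(y) ≥ c₁‖y‖^{-n-2α} for all y with 0 < ‖y‖ ≤ 1. Then there exist constants C₁ > 0 and C₂ > 0, depending only on n, α and c₁, such that for every ξ ∈ ℝⁿ one has ‖ξ‖^{2α} ≤ C₁ ∫_{ℝⁿ} (1 − cos⟨ξ, y⟩) π(y) dy + C₂. -/

import Mathlib

open MeasureTheory
open scoped RealInnerProductSpace

/-- Lower bound `‖ξ‖^(2α) ≤ C₁ a(ξ) + C₂` for the Lévy–Khinchin symbol of a kernel `π`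
bounded below by `c₁ ‖y‖^(-n-2α)` near the origin. -/
theorem levy_symbol_lower_bound
    (n : ℕ) (hn : 1 ≤ n) (α c₁ : ℝ) (hα0 : 0 < α) (hα : α ≤ 1 / 2) (hc₁ : 0 < c₁)
    (π : EuclideanSpace ℝ (Fin n) → ℝ) (hπmeas : Measurable π) (hπ0 : ∀ y, 0 ≤ π y)
    (hπlb : ∀ y : EuclideanSpace ℝ (Fin n), y ≠ 0 → ‖y‖ ≤ 1 →
      c₁ * ‖y‖ ^ (-(n : ℝ) - 2 * α) ≤ π y) :
    ∃ C₁ C₂ : ℝ, 0 < C₁ ∧ 0 < C₂ ∧ ∀ ξ : EuclideanSpace ℝ (Fin n),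
      ENNReal.ofReal (‖ξ‖ ^ (2 * α)) ≤
        ENNReal.ofReal C₁ * (∫⁻ y, ENNReal.ofReal ((1 - Real.cos ⟪ξ, y⟫) * π y))
          + ENNReal.ofReal C₂ := by
  haveI : NeZero n := ⟨by omega⟩
  have hn1 : (1 : ℝ) ≤ (n : ℝ) := by exact_mod_cast hn
  set p : ℝ := -(n : ℝ) - 2 * α with hp
  have hpneg : p ≤ 0 := by rw [hp]; linarith
  set M : ℝ := 3 * n with hM
  have hM3 : (3 : ℝ) ≤ M := by rw [hM]; nlinarith
  have hM0 : 0 < M := by linarith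
  set K : ℝ := c₁ * M ^ p with hK
  have hK0 : 0 < K := mul_pos hc₁ (Real.rpow_pos_of_pos hM0 p)
  refine ⟨K⁻¹, M, inv_pos.2 hK0, by linarith, fun ξ => ?_⟩
  have hαnn : 0 ≤ 2 * α := by linarith
  by_cases hξM : ‖ξ‖ ≤ M
  · have h1 : ‖ξ‖ ^ (2 * α) ≤ M ^ (2 * α) := Real.rpow_le_rpow (norm_nonneg _) hξM hαnn
    have h2 : M ^ (2 * α) ≤ M ^ (1 : ℝ) :=
      Real.rpow_le_rpow_of_exponent_le (by linarith) (by linarith)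
    have h3 : ‖ξ‖ ^ (2 * α) ≤ M := by rw [Real.rpow_one] at h2; linarith
    calc ENNReal.ofReal (‖ξ‖ ^ (2 * α)) ≤ ENNReal.ofReal M := ENNReal.ofReal_le_ofReal h3
      _ ≤ _ := le_add_self
  · push_neg at hξM
    set R : ℝ := ‖ξ‖ with hR
    have hR0 : 0 < R := by linarith
    set δ : ℝ := R⁻¹ with hδ
    have hδ0 : 0 < δ := inv_pos.2 hR0
    have hRδ : R * δ = 1 := mul_inv_cancel₀ (ne_of_gt hR0)
    -- the unit vector along ξ and an isometry sending e₀ to it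
    set e : EuclideanSpace ℝ (Fin n) := R⁻¹ • ξ with he_def
    have he : ‖e‖ = 1 := by
      rw [he_def, norm_smul, norm_inv, Real.norm_eq_abs, abs_of_pos hR0, ← hR,
        inv_mul_cancel₀ (ne_of_gt hR0)]
    set e₀ : EuclideanSpace ℝ (Fin n) := EuclideanSpace.single (0 : Fin n) (1 : ℝ) with he₀_def
    have he₀ : ‖e₀‖ = 1 := by rw [he₀_def, EuclideanSpace.norm_single, norm_one]
    set T := Submodule.reflection (ℝ ∙ (e₀ - e))ᗮ with hT_def
    have hTe : T e₀ = e := Submodule.reflection_sub (by rw [he₀, he])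
    have hξeq : ξ = R • e := by
      rw [he_def, smul_smul, mul_inv_cancel₀ (ne_of_gt hR0), one_smul]
    have hinner : ∀ z : EuclideanSpace ℝ (Fin n), ⟪ξ, T z⟫ = R * z 0 := by
      intro z
      rw [hξeq, real_inner_smul_left, ← hTe, LinearIsometryEquiv.inner_map_map,
        he₀_def, EuclideanSpace.inner_single_left]
      simp
    -- the box
    set a : Fin n → ℝ := fun i => if i = 0 then 2 * δ else 0 with ha_def
    set b : Fin n → ℝ := fun i => if i = 0 then 3 * δ else δ with hb_def
    set box : Set (EuclideanSpace ℝ (Fin n)) :=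
      (MeasurableEquiv.toLp 2 (Fin n → ℝ)).symm ⁻¹' (Set.Icc a b) with hbox_def
    have hboxm : MeasurableSet box :=
      (MeasurableEquiv.toLp 2 (Fin n → ℝ)).symm.measurable measurableSet_Icc
    have hvolbox : volume box = ENNReal.ofReal δ ^ n := by
      rw [hbox_def, (EuclideanSpace.volume_preserving_symm_measurableEquiv_toLp (Fin n)).measure_preimage
        measurableSet_Icc.nullMeasurableSet, Real.volume_Icc_pi]
      have : ∀ i : Fin n, ENNReal.ofReal (b i - a i) = ENNReal.ofReal δ := by
        intro i
        rcases eq_or_ne i 0 with h | h <;> simp [ha_def, hb_def, h] <;> ring_nf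
      rw [Finset.prod_congr rfl fun i _ => this i, Finset.prod_const, Finset.card_univ,
        Fintype.card_fin]
    set S : Set (EuclideanSpace ℝ (Fin n)) := ⇑T.symm ⁻¹' box with hS_def
    have hSm : MeasurableSet S := hboxm.preimage T.symm.continuous.measurable
    have hvolS : volume S = ENNReal.ofReal δ ^ n := by
      rw [hS_def, T.symm.measurePreserving.measure_preimage hboxm.nullMeasurableSet, hvolbox]
    -- pointwise bound on S
    have hpoint : ∀ y ∈ S, c₁ * (M * δ) ^ p ≤ (1 - Real.cos ⟪ξ, y⟫) * π y := by
      intro y hy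
      set z : EuclideanSpace ℝ (Fin n) := T.symm y with hz_def
      have hyz : y = T z := (T.apply_symm_apply y).symm
      have hzbox : WithLp.ofLp z ∈ Set.Icc a b := hy
      have hza : ∀ i, a i ≤ z i := fun i => hzbox.1 i
      have hzb : ∀ i, z i ≤ b i := fun i => hzbox.2 i
      have hz0l : 2 * δ ≤ z 0 := by have := hza 0; simpa [ha_def] using this
      have hz0u : z 0 ≤ 3 * δ := by have := hzb 0; simpa [hb_def] using this
      have hzabs : ∀ i, |z i| ≤ 3 * δ := by
        intro i
        rcases eq_or_ne i 0 with h | h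
        · subst h; rw [abs_le]; constructor <;> linarith
        · have h1 := hza i; have h2 := hzb i
          simp only [ha_def, hb_def, if_neg h] at h1 h2
          rw [abs_le]; constructor <;> linarith
      have hznorm : ‖z‖ ≤ M * δ := by
        rw [EuclideanSpace.norm_eq]
        have hsum : ∑ i, ‖z i‖ ^ 2 ≤ (M * δ) ^ 2 := by
          calc ∑ i, ‖z i‖ ^ 2 ≤ ∑ _i : Fin n, (3 * δ) ^ 2 := by
                refine Finset.sum_le_sum fun i _ => ?_
                rw [Real.norm_eq_abs]
                exact pow_le_pow_left₀ (abs_nonneg _) (hzabs i) 2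
            _ = (n : ℝ) * (3 * δ) ^ 2 := by
                rw [Finset.sum_const, Finset.card_univ, Fintype.card_fin, nsmul_eq_mul]
            _ ≤ (M * δ) ^ 2 := by rw [hM]; nlinarith
        calc Real.sqrt (∑ i, ‖z i‖ ^ 2) ≤ Real.sqrt ((M * δ) ^ 2) := Real.sqrt_le_sqrt hsum
          _ = M * δ := Real.sqrt_sq (by positivity)
      have hynorm : ‖y‖ ≤ M * δ := by rw [hyz, T.norm_map]; exact hznorm
      have hMδ1 : M * δ < 1 := by
        have := mul_lt_mul_of_pos_right hξM hδ0
        rwa [hRδ] at this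
      have hzne : z ≠ 0 := by
        intro h
        have : z 0 = 0 := by rw [h]; rfl
        linarith
      have hyne : y ≠ 0 := by
        intro h
        apply hzne
        rw [hz_def, h, map_zero]
      have hy1 : ‖y‖ ≤ 1 := le_trans hynorm hMδ1.le
      have hypos : 0 < ‖y‖ := norm_pos_iff.2 hyne
      have hπy : c₁ * ‖y‖ ^ p ≤ π y := hπlb y hyne hy1
      have hrp : (M * δ) ^ p ≤ ‖y‖ ^ p :=
        Real.rpow_le_rpow_of_nonpos hypos hynorm hpneg
      have hinner2 : ⟪ξ, y⟫ = R * z 0 := by rw [hyz]; exact hinner z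
      have h2le : 2 ≤ R * z 0 := by
        calc (2 : ℝ) = R * (2 * δ) := by rw [← mul_assoc, mul_comm R 2, mul_assoc, hRδ, mul_one]
          _ ≤ R * z 0 := mul_le_mul_of_nonneg_left hz0l hR0.le
      have h3ge : R * z 0 ≤ 3 := by
        calc R * z 0 ≤ R * (3 * δ) := mul_le_mul_of_nonneg_left hz0u hR0.le
          _ = 3 := by rw [← mul_assoc, mul_comm R 3, mul_assoc, hRδ, mul_one]
      have hcos : Real.cos ⟪ξ, y⟫ ≤ 0 := by
        rw [hinner2]
        apply Real.cos_nonpos_of_pi_div_two_le_of_le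
        · linarith [Real.pi_le_four]
        · linarith [Real.pi_gt_three]
      have h1cos : 1 ≤ 1 - Real.cos ⟪ξ, y⟫ := by linarith
      calc c₁ * (M * δ) ^ p ≤ c₁ * ‖y‖ ^ p := mul_le_mul_of_nonneg_left hrp hc₁.le
        _ ≤ π y := hπy
        _ = 1 * π y := (one_mul _).symm
        _ ≤ (1 - Real.cos ⟪ξ, y⟫) * π y := mul_le_mul_of_nonneg_right h1cos (hπ0 y)
    -- key real identity
    have heq : c₁ * (M * δ) ^ p * δ ^ n = K * R ^ (2 * α) := by
      have h1 : (M * δ) ^ p = M ^ p * δ ^ p := Real.mul_rpow hM0.le hδ0.le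
      have h2 : (δ : ℝ) ^ n = δ ^ (n : ℝ) := (Real.rpow_natCast δ n).symm
      have h3 : δ ^ p * δ ^ (n : ℝ) = δ ^ (p + n) := (Real.rpow_add hδ0 p n).symm
      have h4 : p + (n : ℝ) = -(2 * α) := by rw [hp]; ring
      have h5 : δ ^ (-(2 * α)) = R ^ (2 * α) := by
        rw [hδ, Real.inv_rpow hR0.le, Real.rpow_neg hR0.le, inv_inv]
      rw [h1, h2, hK]
      calc c₁ * (M ^ p * δ ^ p) * δ ^ (n : ℝ) = c₁ * M ^ p * (δ ^ p * δ ^ (n : ℝ)) := by ring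
        _ = c₁ * M ^ p * R ^ (2 * α) := by rw [h3, h4, h5]
    -- main lower bound for the integral
    have hmain : ENNReal.ofReal (K * R ^ (2 * α)) ≤
        ∫⁻ y, ENNReal.ofReal ((1 - Real.cos ⟪ξ, y⟫) * π y) := by
      calc ENNReal.ofReal (K * R ^ (2 * α))
          = ENNReal.ofReal (c₁ * (M * δ) ^ p) * volume S := by
            rw [hvolS, ← ENNReal.ofReal_pow hδ0.le, ← ENNReal.ofReal_mul (by positivity), heq]
        _ = ∫⁻ _ in S, ENNReal.ofReal (c₁ * (M * δ) ^ p) := (setLIntegral_const _ _).symm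
        _ ≤ ∫⁻ y in S, ENNReal.ofReal ((1 - Real.cos ⟪ξ, y⟫) * π y) :=
            setLIntegral_mono' hSm fun y hy => ENNReal.ofReal_le_ofReal (hpoint y hy)
        _ ≤ ∫⁻ y, ENNReal.ofReal ((1 - Real.cos ⟪ξ, y⟫) * π y) :=
            setLIntegral_le_lintegral _ _
    calc ENNReal.ofReal (R ^ (2 * α))
        = ENNReal.ofReal K⁻¹ * ENNReal.ofReal (K * R ^ (2 * α)) := by
          rw [← ENNReal.ofReal_mul (by positivity), ← mul_assoc,
            inv_mul_cancel₀ (ne_of_gt hK0), one_mul]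
      _ ≤ ENNReal.ofReal K⁻¹ * ∫⁻ y, ENNReal.ofReal ((1 - Real.cos ⟪ξ, y⟫) * π y) :=
          mul_le_mul_right hmain _
      _ ≤ _ := le_self_add
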